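/- arXiv:0804.1949 — 3 statements merged into one kernel-verified Lean document; each statement's English description precedes it below -/
import Mathlib

section
/- Let ψ' : ℝ → ℝ be nonnegative, periodic with period p' > 0, and let p > p'. Define ψ : ℝ → ℝ by ψ(x) = ψ'(x) for x ∈ [0, ⌊p/p'⌋·p'), ψ(x) = 0 for x ∈ [⌊p/p'⌋·p', p), extended p-periodically. Then (1 − p'/p) · (1/p')∫₀^{p'} ψ' ≤ (1/p)∫₀^{p} ψ ≤ (1/p')∫₀^{p'} ψ'. -/
open MeasureTheory intervalIntegral

lemma periodic_intervalIntegrable_all {f : ℝ → ℝ} {T : ℝ} (hT : 0 < T)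
    (hf : Function.Periodic f T) (h : IntervalIntegrable f volume 0 T) :
    ∀ a b : ℝ, IntervalIntegrable f volume a b := by
  have hseg : ∀ n : ℤ, IntervalIntegrable f volume ((n : ℝ) * T) (((n : ℝ) + 1) * T) := by
    intro n
    have h2 := h.comp_sub_right ((n : ℝ) * T)
    have heq : (fun x => f (x - (n : ℝ) * T)) = f := by
      funext x
      have h3 := (hf.zsmul (-n)) x
      simpa [zsmul_eq_mul, sub_eq_add_neg] using h3
    rw [heq] at h2
    have harith : ((n : ℝ) + 1) * T = T + (n : ℝ) * T := by ring
    rw [harith]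
    simpa using h2
  have hnat : ∀ n : ℕ, IntervalIntegrable f volume 0 ((n : ℝ) * T) := by
    intro n
    induction n with
    | zero => simp
    | succ k ih =>
      have hs : IntervalIntegrable f volume ((k : ℝ) * T) (((k : ℕ) + 1 : ℝ) * T) := by
        simpa using hseg (k : ℤ)
      have h4 := ih.trans hs
      have e : (((k : ℕ) : ℝ) + 1) * T = ((k + 1 : ℕ) : ℝ) * T := by push_cast; ring
      rwa [e] at h4
  have hneg : ∀ n : ℕ, IntervalIntegrable f volume (-((n : ℝ) * T)) 0 := by
    intro n
    induction n with
    | zero => simp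
    | succ k ih =>
      have hs := hseg (-(k : ℤ) - 1)
      have e1 : ((-(k : ℤ) - 1 : ℤ) : ℝ) * T = -((((k : ℕ) : ℝ) + 1) * T) := by push_cast; ring
      have e2 : (((-(k : ℤ) - 1 : ℤ) : ℝ) + 1) * T = -(((k : ℕ) : ℝ) * T) := by push_cast; ring
      rw [e1, e2] at hs
      have h4 := hs.trans ih
      have e3 : -((((k : ℕ) : ℝ) + 1) * T) = -(((k + 1 : ℕ) : ℝ) * T) := by push_cast; ring
      rwa [e3] at h4
  intro a b
  obtain ⟨n, hn⟩ := exists_nat_gt (max (|a|) (|b|) / T)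
  have hTn : max (|a|) (|b|) ≤ (n : ℝ) * T := by
    have := (div_lt_iff₀ hT).mp hn
    linarith
  have hbig := (hneg n).trans (hnat n)
  refine hbig.mono_set ?_
  have hmem : ∀ x : ℝ, |x| ≤ max (|a|) (|b|) → x ∈ Set.uIcc (-((n : ℝ) * T)) ((n : ℝ) * T) := by
    intro x hx
    have : |x| ≤ (n : ℝ) * T := le_trans hx hTn
    rw [abs_le] at this
    rw [Set.uIcc_of_le (by nlinarith [this.1, this.2] : -((n : ℝ) * T) ≤ (n : ℝ) * T)]
    exact ⟨this.1, this.2⟩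
  exact Set.uIcc_subset_uIcc (hmem a (le_max_left _ _)) (hmem b (le_max_right _ _))

/-- Mean-value estimate for the period-extension construction (Lemma 2.2):
the mean of the truncated/extended function ψ is between (1 - p'/p) times
and one times the mean of the original p'-periodic function ψ'. -/
theorem stmt_3 (ψ' ψ : ℝ → ℝ) (p' p : ℝ) (hp' : 0 < p') (hpp' : p' < p)
    (hnn : ∀ x, 0 ≤ ψ' x) (hper' : Function.Periodic ψ' p')
    (hint : IntervalIntegrable ψ' volume 0 p')
    (hψeq : ∀ x ∈ Set.Ico (0 : ℝ) ((⌊p / p'⌋ : ℝ) * p'), ψ x = ψ' x)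
    (hψ0 : ∀ x ∈ Set.Ico ((⌊p / p'⌋ : ℝ) * p') p, ψ x = 0)
    (hper : Function.Periodic ψ p) :
    (1 - p' / p) * ((1 / p') * ∫ x in (0:ℝ)..p', ψ' x)
      ≤ (1 / p) * ∫ x in (0:ℝ)..p, ψ x ∧
    (1 / p) * (∫ x in (0:ℝ)..p, ψ x) ≤ (1 / p') * ∫ x in (0:ℝ)..p', ψ' x := by
  have hp : (0:ℝ) < p := lt_trans hp' hpp'
  set n : ℤ := ⌊p / p'⌋ with hn
  set c : ℝ := (n : ℝ) * p' with hc
  have hn1 : 1 ≤ n := by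
    rw [hn, Int.le_floor]
    push_cast
    rw [le_div_iff₀ hp']
    linarith
  have hcle : c ≤ p := by
    have := Int.floor_le (p / p')
    rw [hc, hn]
    calc ((⌊p / p'⌋ : ℝ)) * p' ≤ (p / p') * p' := by nlinarith
    _ = p := by field_simp
  have hclt : p - p' < c := by
    have := Int.lt_floor_add_one (p / p')
    have h2 : p / p' * p' < ((n : ℝ) + 1) * p' := by nlinarith
    rw [div_mul_cancel₀ _ hp'.ne'] at h2
    rw [hc]; linarith
  have hc0 : (0:ℝ) ≤ c := by
    rw [hc]
    have : (1:ℝ) ≤ (n:ℝ) := by exact_mod_cast hn1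
    nlinarith
  have h_int : ∀ t₁ t₂ : ℝ, IntervalIntegrable ψ' volume t₁ t₂ :=
    periodic_intervalIntegrable_all hp' hper' hint
  -- a.e. equality on (0, c]
  have hne_c : ∀ᵐ x : ℝ, x ≠ c := by
    rw [ae_iff]
    simp only [not_not, Set.setOf_eq_eq_singleton]
    exact measure_singleton c
  have ae1 : ∀ᵐ x : ℝ, x ∈ Set.uIoc (0:ℝ) c → ψ x = ψ' x := by
    filter_upwards [hne_c] with x hx hmem
    rw [Set.uIoc_of_le hc0] at hmem
    exact hψeq x ⟨hmem.1.le, lt_of_le_of_ne hmem.2 hx⟩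
  have hne_p : ∀ᵐ x : ℝ, x ≠ p := by
    rw [ae_iff]
    simp only [not_not, Set.setOf_eq_eq_singleton]
    exact measure_singleton p
  have ae2 : ∀ᵐ x : ℝ, x ∈ Set.uIoc c p → ψ x = 0 := by
    filter_upwards [hne_p] with x hx hmem
    rw [Set.uIoc_of_le hcle] at hmem
    exact hψ0 x ⟨hmem.1.le, lt_of_le_of_ne hmem.2 hx⟩
  -- integrability of ψ
  have heq1 : ψ' =ᵐ[volume.restrict (Set.uIoc (0:ℝ) c)] ψ := by
    filter_upwards [ae_restrict_of_ae ae1, ae_restrict_mem measurableSet_uIoc] with x hx hmem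
    exact (hx hmem).symm
  have hint1 : IntervalIntegrable ψ volume 0 c := by
    have h' := h_int 0 c
    rw [intervalIntegrable_iff] at h' ⊢
    exact h'.congr heq1
  have heq2 : (fun _ : ℝ => (0:ℝ)) =ᵐ[volume.restrict (Set.uIoc c p)] ψ := by
    filter_upwards [ae_restrict_of_ae ae2, ae_restrict_mem measurableSet_uIoc] with x hx hmem
    exact (hx hmem).symm
  have hint2 : IntervalIntegrable ψ volume c p := by
    rw [intervalIntegrable_iff]
    exact (integrableOn_zero).congr heq2
  -- integral computations
  have hI1 : ∫ x in (0:ℝ)..c, ψ x = ∫ x in (0:ℝ)..c, ψ' x :=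
    intervalIntegral.integral_congr_ae ae1
  have hI2 : ∫ x in c..p, ψ x = 0 := by
    rw [intervalIntegral.integral_congr_ae ae2]
    simp
  have hzsmul : ∫ x in (0:ℝ)..c, ψ' x = (n : ℝ) * ∫ x in (0:ℝ)..p', ψ' x := by
    have := hper'.intervalIntegral_add_zsmul_eq n 0 h_int
    simpa [zsmul_eq_mul, hc] using this
  have hsplit : ∫ x in (0:ℝ)..p, ψ x = (n : ℝ) * ∫ x in (0:ℝ)..p', ψ' x := by
    rw [← intervalIntegral.integral_add_adjacent_intervals hint1 hint2, hI1, hI2, hzsmul, add_zero]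
  set I : ℝ := ∫ x in (0:ℝ)..p', ψ' x with hIdef
  have hInn : 0 ≤ I :=
    intervalIntegral.integral_nonneg hp'.le fun x _ => hnn x
  rw [hsplit]
  constructor
  · rw [show (1 - p' / p) * ((1 / p') * I) = (p - p') * I / (p * p') by field_simp; try ring,
      show (1 / p) * ((n:ℝ) * I) = (n:ℝ) * I * p' / (p * p') by field_simp; try ring]
    gcongr ?_ / _
    calc (p - p') * I ≤ c * I := mul_le_mul_of_nonneg_right hclt.le hInn
    _ = (n:ℝ) * I * p' := by rw [hc]; ring
  · rw [show (1 / p) * ((n:ℝ) * I) = (n:ℝ) * I * p' / (p * p') by field_simp; try ring,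
      show (1 / p') * I = I * p / (p * p') by field_simp; try ring]
    gcongr ?_ / _
    calc (n:ℝ) * I * p' = c * I := by rw [hc]; ring
    _ ≤ p * I := mul_le_mul_of_nonneg_right hcle hInn
    _ = I * p := by ring
end

section
/- Let k_{j−1} < k_j, n ∈ ℕ, and define X(1/2,3/4) = ⋃_{t∈ℤ} [(t+1/2)·2^{n+k_{j−1}}, (t+3/4)·2^{n+k_{j−1}}), split into X_e (t even) and X_o (t odd). Suppose x ∈ X_e, y ∈ X_o, x < y, and l = ⌊y⌋ − ⌊x⌋ > 0. Then ⌊x⌋ ∈ X_e, x + l ∈ X_o, and there exists t' ∈ ℤ with x + 2l ∈ [2t'·2^{n+k_{j−1}}, (2t'+1)·2^{n+k_{j−1}}). -/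
/-- The parity mechanism preceding equation (22): with quarter segments
X_e (even t) and X_o (odd t) at scale c = 2^m, points x ∈ X_e, y ∈ X_o with
l = ⌊y⌋ - ⌊x⌋ > 0 satisfy ⌊x⌋ ∈ X_e, x + l ∈ X_o, and x + 2l lies in an
even-indexed block. -/
theorem stmt_8 (m : ℕ) (hm : 2 ≤ m) (x y : ℝ)
    (hx : ∃ t : ℤ, Even t ∧
      x ∈ Set.Ico (((t : ℝ) + 1/2) * 2 ^ m) (((t : ℝ) + 3/4) * 2 ^ m))
    (hy : ∃ t : ℤ, Odd t ∧
      y ∈ Set.Ico (((t : ℝ) + 1/2) * 2 ^ m) (((t : ℝ) + 3/4) * 2 ^ m))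
    (hxy : x < y) (l : ℤ) (hl : l = ⌊y⌋ - ⌊x⌋) (hlpos : 0 < l) :
    (∃ t : ℤ, Even t ∧
      (⌊x⌋ : ℝ) ∈ Set.Ico (((t : ℝ) + 1/2) * 2 ^ m) (((t : ℝ) + 3/4) * 2 ^ m)) ∧
    (∃ t : ℤ, Odd t ∧
      x + (l : ℝ) ∈ Set.Ico (((t : ℝ) + 1/2) * 2 ^ m) (((t : ℝ) + 3/4) * 2 ^ m)) ∧
    (∃ t' : ℤ, x + 2 * (l : ℝ) ∈
      Set.Ico ((2 * (t' : ℝ)) * 2 ^ m) ((2 * (t' : ℝ) + 1) * 2 ^ m)) := by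
  obtain ⟨k, rfl⟩ : ∃ k, m = k + 2 := ⟨m - 2, by omega⟩
  obtain ⟨s, hs, hx1, hx2⟩ := hx
  obtain ⟨t, ht, hy1, hy2⟩ := hy
  have hp : (2:ℝ) ^ (k + 2) = 4 * 2 ^ k := by ring
  have hpk : (0:ℝ) < 2 ^ k := by positivity
  have es1 : ((s:ℝ) + 1/2) * 2 ^ (k+2) = (4*(s:ℝ)+2) * 2 ^ k := by rw [hp]; ring
  have es2 : ((s:ℝ) + 3/4) * 2 ^ (k+2) = (4*(s:ℝ)+3) * 2 ^ k := by rw [hp]; ring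
  have et1 : ((t:ℝ) + 1/2) * 2 ^ (k+2) = (4*(t:ℝ)+2) * 2 ^ k := by rw [hp]; ring
  have et2 : ((t:ℝ) + 3/4) * 2 ^ (k+2) = (4*(t:ℝ)+3) * 2 ^ k := by rw [hp]; ring
  rw [es1] at hx1; rw [es2] at hx2; rw [et1] at hy1; rw [et2] at hy2
  have hfx1 : (4*s+2)*2^k ≤ ⌊x⌋ := Int.le_floor.mpr (by push_cast; exact hx1)
  have hfx2 : ⌊x⌋ < (4*s+3)*2^k := Int.floor_lt.mpr (by push_cast; exact hx2)
  have hfy1 : (4*t+2)*2^k ≤ ⌊y⌋ := Int.le_floor.mpr (by push_cast; exact hy1)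
  have hfy2 : ⌊y⌋ < (4*t+3)*2^k := Int.floor_lt.mpr (by push_cast; exact hy2)
  have hfx1R : (4*(s:ℝ)+2)*2^k ≤ (⌊x⌋:ℝ) := by exact_mod_cast hfx1
  have hfx2R : (⌊x⌋:ℝ) + 1 ≤ (4*(s:ℝ)+3)*2^k := by
    exact_mod_cast Int.add_one_le_iff.mpr hfx2
  have hfy1R : (4*(t:ℝ)+2)*2^k ≤ (⌊y⌋:ℝ) := by exact_mod_cast hfy1
  have hfy2R : (⌊y⌋:ℝ) + 1 ≤ (4*(t:ℝ)+3)*2^k := by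
    exact_mod_cast Int.add_one_le_iff.mpr hfy2
  have hxf : (⌊x⌋:ℝ) ≤ x := Int.floor_le x
  have hxf' : x < (⌊x⌋:ℝ) + 1 := Int.lt_floor_add_one x
  have hlR : (l:ℝ) = (⌊y⌋:ℝ) - (⌊x⌋:ℝ) := by exact_mod_cast hl
  obtain ⟨s', rfl⟩ := hs
  refine ⟨⟨s' + s', ⟨s', rfl⟩, ?_, ?_⟩, ⟨t, ht, ?_, ?_⟩, ⟨t - s', ?_, ?_⟩⟩
  · push_cast at hfx1R ⊢
    have e : ((s':ℝ) + s' + 1/2) * 2 ^ (k+2) = (4*((s':ℝ)+s')+2) * 2 ^ k := by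
      rw [hp]; ring
    rw [e]; linarith
  · push_cast
    have e : ((s':ℝ) + s' + 3/4) * 2 ^ (k+2) = (4*((s':ℝ)+s')+3) * 2 ^ k := by
      rw [hp]; ring
    push_cast at hx2
    rw [e]; linarith [hxf, hx2]
  · rw [et1]; linarith [hfy1R, hxf, hlR]
  · rw [et2]; linarith [hfy2R, hxf', hlR]
  · push_cast
    have e : 2 * ((t:ℝ) - s') * 2 ^ (k+2) = (8*(t:ℝ) - 8*(s':ℝ)) * 2 ^ k := by
      rw [hp]; ring
    push_cast at hfx2R
    rw [e]; nlinarith [hfy1R, hfx2R, hxf, hlR, hpk]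
  · push_cast
    have e : (2 * ((t:ℝ) - s') + 1) * 2 ^ (k+2) = (8*(t:ℝ) - 8*(s':ℝ) + 4) * 2 ^ k := by
      rw [hp]; ring
    push_cast at hfx1R
    rw [e]; nlinarith [hfy2R, hfx1R, hxf', hlR, hpk]
end

section
/- Let (Y_j, ℬ_j, μ_j, T_j), j ∈ ℕ, be probability-measure-preserving systems, and let Y = ∏_j Y_j with product measure μ and U(y)_j = T_j(y_j). Suppose for each j there are nonnegative measurable F_j, G_j on Y_j with μ_j{ y_j : sup_{l≥1} F_j(T_j^l y_j) G_j(T_j^{2l} y_j)/l ≥ c_j } > ε, where c_j → ∞. Define W(y) = Σ_j √β_j F_j(y_j) and Q(y) = Σ_j √β_j G_j(y_j) with β_j > 0. If β_j c_j → ∞, then μ{ y : sup_{l≥1} W(U^l y) Q(U^{2l} y)/l = ∞ } ≥ ε. -/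
open MeasureTheory Filter ENNReal

/-- Product-system amplification (Section 2.9): if on each coordinate system
the tail maximal function exceeds c_j on a set of measure > ε, with c_j → ∞,
then for W = Σ √β_j F_j, Q = Σ √β_j G_j on the product system (β_j c_j → ∞),
the tail maximal function of (W, Q) is infinite on a set of measure ≥ ε. -/
theorem stmt_10 (Y : ℕ → Type*) [∀ j, MeasurableSpace (Y j)]
    (μ : ∀ j, Measure (Y j)) [∀ j, IsProbabilityMeasure (μ j)]
    (T : ∀ j, Y j → Y j) (hT : ∀ j, MeasurePreserving (T j) (μ j) (μ j))
    (μprod : Measure (∀ j, Y j)) [IsProbabilityMeasure μprod]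
    (hmarg : ∀ (j : ℕ) (A : Set (Y j)), MeasurableSet A →
      μprod {y | y j ∈ A} = μ j A)
    (F G : ∀ j, Y j → ℝ≥0∞) (hF : ∀ j, Measurable (F j)) (hG : ∀ j, Measurable (G j))
    (β : ℕ → ℝ) (hβ : ∀ j, 0 < β j) (c : ℕ → ℝ) (hc : Tendsto c atTop atTop)
    (ε : ℝ≥0∞)
    (hbig : ∀ j, ε < μ j {x | ENNReal.ofReal (c j) ≤
      ⨆ l : ℕ, ⨆ _ : 1 ≤ l, F j ((T j)^[l] x) * G j ((T j)^[2 * l] x) / (l : ℝ≥0∞)})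
    (hβc : Tendsto (fun j => β j * c j) atTop atTop)
    (W Q : (∀ j, Y j) → ℝ≥0∞)
    (hW : ∀ y, W y = ∑' j, ENNReal.ofReal (Real.sqrt (β j)) * F j (y j))
    (hQ : ∀ y, Q y = ∑' j, ENNReal.ofReal (Real.sqrt (β j)) * G j (y j))
    (U : (∀ j, Y j) → ∀ j, Y j) (hU : ∀ y j, U y j = T j (y j)) :
    ε ≤ μprod {y | (⨆ l : ℕ, ⨆ _ : 1 ≤ l,
      W (U^[l] y) * Q (U^[2 * l] y) / (l : ℝ≥0∞)) = ⊤} := by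
  classical
  have hUeq : U = fun y j => T j (y j) := by funext y j; exact hU y j
  have hUmeas : Measurable U := by
    rw [hUeq]
    exact measurable_pi_lambda _ fun j => ((hT j).measurable).comp (measurable_pi_apply j)
  have hWmeas : Measurable W := by
    have h : W = fun y => ∑' j, ENNReal.ofReal (Real.sqrt (β j)) * F j (y j) := funext hW
    rw [h]
    exact Measurable.ennreal_tsum fun j => measurable_const.mul ((hF j).comp (measurable_pi_apply j))
  have hQmeas : Measurable Q := by
    have h : Q = fun y => ∑' j, ENNReal.ofReal (Real.sqrt (β j)) * G j (y j) := funext hQ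
    rw [h]
    exact Measurable.ennreal_tsum fun j => measurable_const.mul ((hG j).comp (measurable_pi_apply j))
  set S : (∀ j, Y j) → ℝ≥0∞ := fun y => ⨆ l : ℕ, ⨆ _ : 1 ≤ l,
      W (U^[l] y) * Q (U^[2 * l] y) / (l : ℝ≥0∞) with hSdef
  have hSmeas : Measurable S := by
    apply Measurable.iSup; intro l; apply Measurable.iSup; intro _
    exact ((hWmeas.comp (hUmeas.iterate l)).mul (hQmeas.comp (hUmeas.iterate (2 * l)))).div
      measurable_const
  -- coordinate sup
  set M : ∀ j, Y j → ℝ≥0∞ := fun j x => ⨆ l : ℕ, ⨆ _ : 1 ≤ l,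
      F j ((T j)^[l] x) * G j ((T j)^[2 * l] x) / (l : ℝ≥0∞) with hMdef
  have hMmeas : ∀ j, Measurable (M j) := by
    intro j
    apply Measurable.iSup; intro l; apply Measurable.iSup; intro _
    exact (((hF j).comp ((hT j).measurable.iterate l)).mul
      ((hG j).comp ((hT j).measurable.iterate (2 * l)))).div measurable_const
  have hiter : ∀ (l : ℕ) (y : ∀ j, Y j) (j : ℕ), (U^[l] y) j = (T j)^[l] (y j) := by
    intro l
    induction l with
    | zero => intro y j; simp
    | succ n ih =>
      intro y j
      rw [Function.iterate_succ_apply, Function.iterate_succ_apply]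
      rw [ih (U y) j, hU y j]
  -- key pointwise inequality
  have key : ∀ (j : ℕ) (y : ∀ j, Y j), ENNReal.ofReal (β j) * M j (y j) ≤ S y := by
    intro j y
    rw [ENNReal.mul_iSup]
    apply iSup_le; intro l
    rw [ENNReal.mul_iSup]
    apply iSup_le; intro hl
    refine le_trans ?_ (le_iSup_of_le l (le_iSup_of_le hl le_rfl))
    rw [← mul_div_assoc]
    apply ENNReal.div_le_div_right
    have hb : ENNReal.ofReal (β j) =
        ENNReal.ofReal (Real.sqrt (β j)) * ENNReal.ofReal (Real.sqrt (β j)) := by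
      rw [← ENNReal.ofReal_mul (Real.sqrt_nonneg _), Real.mul_self_sqrt (hβ j).le]
    rw [hb, mul_mul_mul_comm]
    have h1 : ENNReal.ofReal (Real.sqrt (β j)) * F j ((T j)^[l] (y j)) ≤ W (U^[l] y) := by
      rw [hW]
      have := ENNReal.le_tsum (f := fun i => ENNReal.ofReal (Real.sqrt (β i)) * F i ((U^[l] y) i)) j
      rwa [hiter l y j] at this
    have h2 : ENNReal.ofReal (Real.sqrt (β j)) * G j ((T j)^[2 * l] (y j)) ≤ Q (U^[2 * l] y) := by
      rw [hQ]
      have := ENNReal.le_tsum (f := fun i => ENNReal.ofReal (Real.sqrt (β i)) * G i ((U^[2 * l] y) i)) j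
      rwa [hiter (2 * l) y j] at this
    exact mul_le_mul' h1 h2
  -- sets B n = {S ≥ n}
  set B : ℕ → Set (∀ j, Y j) := fun n => {y | (n : ℝ≥0∞) ≤ S y} with hBdef
  have hBmeas : ∀ n, MeasurableSet (B n) := fun n => hSmeas measurableSet_Ici
  have hBanti : Antitone B := by
    intro n m hnm y hy
    exact le_trans (by exact_mod_cast hnm : (n : ℝ≥0∞) ≤ (m : ℝ≥0∞)) hy
  have hBbig : ∀ n, ε ≤ μprod (B n) := by
    intro n
    obtain ⟨j, hj1, hj2⟩ : ∃ j, (n : ℝ) ≤ β j * c j ∧ (0 : ℝ) ≤ c j := by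
      have h1 := hβc.eventually_ge_atTop (n : ℝ)
      have h2 := hc.eventually_ge_atTop (0 : ℝ)
      rcases (h1.and h2).exists with ⟨j, hj⟩
      exact ⟨j, hj.1, hj.2⟩
    have hsub : {y : ∀ j, Y j | y j ∈ {x | ENNReal.ofReal (c j) ≤ M j x}} ⊆ B n := by
      intro y hy
      have h1 : ENNReal.ofReal (β j * c j) ≤ S y := by
        rw [ENNReal.ofReal_mul (hβ j).le]
        exact le_trans (mul_le_mul_right hy _) (key j y)
      refine le_trans ?_ h1
      rw [show ((n : ℕ) : ℝ≥0∞) = ENNReal.ofReal (n : ℝ) by simp]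
      exact ENNReal.ofReal_le_ofReal hj1
    have hm : MeasurableSet {x | ENNReal.ofReal (c j) ≤ M j x} :=
      (hMmeas j) measurableSet_Ici
    calc ε ≤ μ j {x | ENNReal.ofReal (c j) ≤ M j x} := (hbig j).le
      _ = μprod {y | y j ∈ {x | ENNReal.ofReal (c j) ≤ M j x}} := (hmarg j _ hm).symm
      _ ≤ μprod (B n) := measure_mono hsub
  have hInter : {y | S y = ⊤} = ⋂ n, B n := by
    ext y
    simp only [Set.mem_setOf_eq, Set.mem_iInter, hBdef]
    constructor
    · intro h n; rw [h]; exact le_top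
    · intro h
      by_contra hne
      obtain ⟨n, hn⟩ := ENNReal.exists_nat_gt hne
      exact absurd (h n) (not_le.mpr hn)
  have : μprod {y | S y = ⊤} = ⨅ n, μprod (B n) := by
    rw [hInter]
    exact Antitone.measure_iInter hBanti (fun n => (hBmeas n).nullMeasurableSet)
      ⟨0, measure_ne_top _ _⟩
  show ε ≤ μprod {y | S y = ⊤}
  rw [this]
  exact le_iInf hBbig
end
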